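/- Let λ > 0, let p, d, T be natural numbers with p + d ≤ T, and let Z_p, …, Z_{2T−1} and δ_T, …, δ_{2T−1} be vectors in ℝ^q such that Z_k = a_{d−1} Z_{k−1} + ⋯ + a₀ Z_{k−d} + δ_k for all T ≤ k ≤ 2T−1, where a₀, …, a_{d−1} are real coefficients. Define V̄_k = λI + Σ_{j=p}^{k} Z_j Z_jᵀ. Then Σ_{k=T}^{2T−1} ‖V̄_{k−1}^{−1/2} Z_k‖₂² ≤ 2 d ‖a‖₂² · log det( V̄_{2T−1} · λ^{−1} ) + 2 Σ_{k=T}^{2T−1} ‖V̄_{k−1}^{−1/2} δ_k‖₂², where ‖a‖₂² = 1 + Σ_{i=0}^{d−1} a_i². -/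

import Mathlib

open Matrix Finset

/-- Euclidean norm of a finitely supported real vector. -/
noncomputable def evnorm {α : Type*} [Fintype α] (x : α → ℝ) : ℝ :=
  Real.sqrt (∑ i, (x i) ^ 2)

/-- The regularized Gram matrix `V̄_k = λ I + ∑_{j=p}^{k} Z_j Z_jᵀ`. -/
noncomputable def Vbar {q : ℕ} (lam : ℝ) (p : ℕ) (Z : ℕ → Fin q → ℝ) (k : ℕ) :
    Matrix (Fin q) (Fin q) ℝ :=
  lam • (1 : Matrix (Fin q) (Fin q) ℝ) + ∑ j ∈ Finset.Icc p k, vecMulVec (Z j) (Z j)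

open scoped Classical in
/-- The inverse square root `V^{-1/2}` of a positive semidefinite matrix
(junk value `0` if `V` is not positive semidefinite). -/
noncomputable def matInvSqrt {q : ℕ} (V : Matrix (Fin q) (Fin q) ℝ) :
    Matrix (Fin q) (Fin q) ℝ :=
  if h : V.PosSemidef then
    (h.1.eigenvectorUnitary.1 * diagonal (Real.sqrt ∘ h.1.eigenvalues) *
      (star h.1.eigenvectorUnitary : Matrix (Fin q) (Fin q) ℝ))⁻¹ else 0

variable {q : ℕ}

lemma evnorm_sq {α : Type*} [Fintype α] (x : α → ℝ) : evnorm x ^ 2 = ∑ i, (x i) ^ 2 := by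
  rw [evnorm, Real.sq_sqrt]; exact Finset.sum_nonneg fun i _ => sq_nonneg _

lemma evnorm_sq_eq_dot (x : Fin q → ℝ) : evnorm x ^ 2 = x ⬝ᵥ x := by
  rw [evnorm_sq]; simp [dotProduct, sq]

lemma posSemidef_vecMulVec (x : Fin q → ℝ) : (vecMulVec x x).PosSemidef := by
  refine Matrix.PosSemidef.of_dotProduct_mulVec_nonneg ?_ ?_
  · ext i j
    simp [conjTranspose, vecMulVec_apply, mul_comm]
  · intro y
    have : star y ⬝ᵥ (vecMulVec x x *ᵥ y) = (x ⬝ᵥ y) ^ 2 := by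
      simp only [star_trivial, dotProduct, mulVec, vecMulVec_apply, sq]
      simp only [Finset.mul_sum, Finset.sum_mul]
      rw [Finset.sum_comm]
      exact Finset.sum_congr rfl fun i _ => Finset.sum_congr rfl fun j _ => by ring
    rw [this]; exact sq_nonneg _

lemma posSemidef_sum_vecMulVec {ι : Type*} (s : Finset ι) (f : ι → Fin q → ℝ) :
    (∑ i ∈ s, vecMulVec (f i) (f i)).PosSemidef := by
  classical
  induction s using Finset.induction with
  | empty => simpa using Matrix.PosSemidef.zero
  | insert a s h ih => rw [Finset.sum_insert h]; exact (posSemidef_vecMulVec _).add ih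

lemma vecMulVec_mulVec (x y v : Fin q → ℝ) : vecMulVec x y *ᵥ v = (y ⬝ᵥ v) • x := by
  ext i
  simp [mulVec, vecMulVec_apply, dotProduct, Finset.mul_sum, mul_comm, mul_left_comm]

lemma sym_of_posSemidef {A : Matrix (Fin q) (Fin q) ℝ} (hA : A.PosSemidef) : Aᵀ = A := by
  have := hA.isHermitian
  rwa [Matrix.IsHermitian, conjTranspose_eq_transpose_of_trivial] at this

lemma dot_inv_aux {A : Matrix (Fin q) (Fin q) ℝ} (hA : A.PosDef) (x y : Fin q → ℝ) :
    2 * (x ⬝ᵥ y) - x ⬝ᵥ (A *ᵥ x) ≤ y ⬝ᵥ (A⁻¹ *ᵥ y) := by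
  have hAs : Aᵀ = A := sym_of_posSemidef hA.posSemidef
  have hdet : IsUnit A.det := hA.det_pos.ne'.isUnit
  have h0 := hA.posSemidef.dotProduct_mulVec_nonneg (x - A⁻¹ *ᵥ y)
  rw [star_trivial] at h0
  have e1 : A *ᵥ (x - A⁻¹ *ᵥ y) = A *ᵥ x - y := by
    rw [mulVec_sub, mulVec_mulVec, Matrix.mul_nonsing_inv _ hdet, one_mulVec]
  rw [e1, sub_dotProduct, dotProduct_sub, dotProduct_sub] at h0
  have e2 : (A⁻¹ *ᵥ y) ⬝ᵥ (A *ᵥ x) = y ⬝ᵥ x := by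
    rw [dotProduct_mulVec, ← mulVec_transpose, mulVec_mulVec, hAs,
      Matrix.mul_nonsing_inv _ hdet, one_mulVec]
  have e3 : (A⁻¹ *ᵥ y) ⬝ᵥ y = y ⬝ᵥ (A⁻¹ *ᵥ y) := dotProduct_comm _ _
  have e4 : x ⬝ᵥ y = y ⬝ᵥ x := dotProduct_comm _ _
  rw [e2, e3] at h0
  linarith

lemma quad_inv_mono {A B : Matrix (Fin q) (Fin q) ℝ} (hA : A.PosDef) (hB : B.PosDef)
    (hAB : (B - A).PosSemidef) (y : Fin q → ℝ) :
    y ⬝ᵥ (B⁻¹ *ᵥ y) ≤ y ⬝ᵥ (A⁻¹ *ᵥ y) := by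
  have hBdet : IsUnit B.det := hB.det_pos.ne'.isUnit
  have hBs : Bᵀ = B := sym_of_posSemidef hB.posSemidef
  set x := B⁻¹ *ᵥ y with hx
  have hBx : B *ᵥ x = y := by
    rw [hx, mulVec_mulVec, Matrix.mul_nonsing_inv _ hBdet, one_mulVec]
  have hsub := hAB.dotProduct_mulVec_nonneg x
  rw [star_trivial, sub_mulVec, dotProduct_sub] at hsub
  have e5 : x ⬝ᵥ y = y ⬝ᵥ (B⁻¹ *ᵥ y) := by
    rw [hx, dotProduct_comm]
  have key := dot_inv_aux hA x y
  have e6 : x ⬝ᵥ (B *ᵥ x) = y ⬝ᵥ (B⁻¹ *ᵥ y) := by rw [hBx, e5]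
  linarith

lemma quad_inv_nonneg {A : Matrix (Fin q) (Fin q) ℝ} (hA : A.PosDef) (y : Fin q → ℝ) :
    0 ≤ y ⬝ᵥ (A⁻¹ *ᵥ y) := by
  have := hA.inv.posSemidef.dotProduct_mulVec_nonneg y
  rwa [star_trivial] at this

lemma evnorm_matInvSqrt_sq {V : Matrix (Fin q) (Fin q) ℝ} (hV : V.PosDef) (y : Fin q → ℝ) :
    evnorm (matInvSqrt V *ᵥ y) ^ 2 = y ⬝ᵥ (V⁻¹ *ᵥ y) := by
  have hpsd := hV.posSemidef
  rw [matInvSqrt, dif_pos hpsd]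
  set S := (hpsd.1.eigenvectorUnitary.1 * diagonal (Real.sqrt ∘ hpsd.1.eigenvalues) *
      (star hpsd.1.eigenvectorUnitary : Matrix (Fin q) (Fin q) ℝ)) with hS
  have hSs : Sᵀ = S := by
    simp [hS, transpose_mul, Matrix.star_eq_conjTranspose, conjTranspose_eq_transpose_of_trivial,
      diagonal_transpose, Matrix.mul_assoc]
  have hSS : S * S = V := by
    have hspec := hpsd.1.spectral_theorem
    have hU : (star hpsd.1.eigenvectorUnitary : Matrix (Fin q) (Fin q) ℝ) *
        hpsd.1.eigenvectorUnitary.1 = 1 := Unitary.star_mul_self_of_mem hpsd.1.eigenvectorUnitary.2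
    have hD : diagonal (Real.sqrt ∘ hpsd.1.eigenvalues) * diagonal (Real.sqrt ∘ hpsd.1.eigenvalues)
        = diagonal (RCLike.ofReal ∘ hpsd.1.eigenvalues) := by
      rw [diagonal_mul_diagonal]
      congr 1
      funext i
      simp [Real.mul_self_sqrt (hpsd.eigenvalues_nonneg i)]
    rw [hS]
    calc _ = hpsd.1.eigenvectorUnitary.1 * diagonal (Real.sqrt ∘ hpsd.1.eigenvalues) *
          ((star hpsd.1.eigenvectorUnitary : Matrix (Fin q) (Fin q) ℝ) *
            hpsd.1.eigenvectorUnitary.1) * diagonal (Real.sqrt ∘ hpsd.1.eigenvalues) *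
          (star hpsd.1.eigenvectorUnitary : Matrix (Fin q) (Fin q) ℝ) := by
            simp only [Matrix.mul_assoc]
      _ = V := by
        rw [hU, Matrix.mul_one, Matrix.mul_assoc _ (diagonal _) (diagonal _), hD]
        conv_rhs => rw [hspec]
        rfl
  rw [evnorm_sq_eq_dot]
  have : y ⬝ᵥ ((S⁻¹ᵀ * S⁻¹) *ᵥ y) = (S⁻¹ *ᵥ y) ⬝ᵥ (S⁻¹ *ᵥ y) := by
    rw [← mulVec_mulVec, dotProduct_mulVec, vecMul_transpose]
  rw [← this, transpose_nonsing_inv, hSs, ← Matrix.mul_inv_rev, hSS]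
noncomputable def Ubar {q : ℕ} (lam : ℝ) (p : ℕ) (Z : ℕ → Fin q → ℝ) (n : ℕ) :
    Matrix (Fin q) (Fin q) ℝ :=
  lam • (1 : Matrix (Fin q) (Fin q) ℝ) + ∑ i ∈ Finset.range n, vecMulVec (Z (p + i)) (Z (p + i))

variable {lam : ℝ} {p : ℕ} {Z : ℕ → Fin q → ℝ}

lemma smul_one_posDef (hlam : 0 < lam) :
    (lam • (1 : Matrix (Fin q) (Fin q) ℝ)).PosDef := by
  have : lam • (1 : Matrix (Fin q) (Fin q) ℝ) = diagonal (fun _ => lam) := by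
    ext i j
    by_cases h : i = j <;> simp [Matrix.one_apply, diagonal, h]
  rw [this]
  exact Matrix.PosDef.diagonal fun _ => hlam

lemma Ubar_posDef (hlam : 0 < lam) (n : ℕ) : (Ubar lam p Z n).PosDef :=
  (smul_one_posDef hlam).add_posSemidef (posSemidef_sum_vecMulVec _ _)

lemma Vbar_eq_Ubar (k : ℕ) : Vbar lam p Z k = Ubar lam p Z (k + 1 - p) := by
  rw [Vbar, Ubar, ← Finset.Ico_add_one_right_eq_Icc, Finset.sum_Ico_eq_sum_range]

lemma Ubar_succ (n : ℕ) :
    Ubar lam p Z (n + 1) = Ubar lam p Z n + vecMulVec (Z (p + n)) (Z (p + n)) := by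
  rw [Ubar, Ubar, Finset.sum_range_succ, add_assoc]

lemma Ubar_sub_posSemidef {m n : ℕ} (h : m ≤ n) :
    (Ubar lam p Z n - Ubar lam p Z m).PosSemidef := by
  have e : Ubar lam p Z n - Ubar lam p Z m
      = ∑ i ∈ Finset.Ico m n, vecMulVec (Z (p + i)) (Z (p + i)) := by
    rw [Ubar, Ubar, Finset.sum_Ico_eq_sub _ h]
    abel
  rw [e]
  exact posSemidef_sum_vecMulVec _ _

lemma det_rank_one {A : Matrix (Fin q) (Fin q) ℝ} (hA : A.PosDef) (x : Fin q → ℝ) :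
    (A + vecMulVec x x).det = A.det * (1 + x ⬝ᵥ (A⁻¹ *ᵥ x)) := by
  have hdet : IsUnit A.det := hA.det_pos.ne'.isUnit
  rw [vecMulVec_eq Unit, Matrix.det_add_replicateCol_mul_replicateRow hdet]
  congr 1
  rw [det_unique, Matrix.add_apply, Matrix.one_apply_eq, ← Matrix.replicateRow_vecMul,
    replicateRow_mul_replicateCol_apply, dotProduct_mulVec]

lemma quad_rank_one {A : Matrix (Fin q) (Fin q) ℝ} (hA : A.PosDef) (x : Fin q → ℝ) :
    x ⬝ᵥ ((A + vecMulVec x x)⁻¹ *ᵥ x)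
      = (x ⬝ᵥ (A⁻¹ *ᵥ x)) / (1 + x ⬝ᵥ (A⁻¹ *ᵥ x)) := by
  set s := x ⬝ᵥ (A⁻¹ *ᵥ x) with hs
  have hs0 : 0 ≤ s := quad_inv_nonneg hA x
  have hB : (A + vecMulVec x x).PosDef := hA.add_posSemidef (posSemidef_vecMulVec x)
  have hBdet : IsUnit (A + vecMulVec x x).det := hB.det_pos.ne'.isUnit
  have hAdet : IsUnit A.det := hA.det_pos.ne'.isUnit
  have key : (A + vecMulVec x x) *ᵥ (A⁻¹ *ᵥ x) = (1 + s) • x := by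
    rw [add_mulVec, mulVec_mulVec, Matrix.mul_nonsing_inv _ hAdet, one_mulVec,
      vecMulVec_mulVec, ← hs, add_smul, one_smul]
  have key2 : A⁻¹ *ᵥ x = (1 + s) • ((A + vecMulVec x x)⁻¹ *ᵥ x) := by
    have h2 : (A + vecMulVec x x)⁻¹ *ᵥ ((A + vecMulVec x x) *ᵥ (A⁻¹ *ᵥ x))
        = (A + vecMulVec x x)⁻¹ *ᵥ ((1 + s) • x) := by rw [key]
    rwa [mulVec_mulVec, Matrix.nonsing_inv_mul _ hBdet, one_mulVec, mulVec_smul] at h2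
  have h3 : s = (1 + s) * (x ⬝ᵥ ((A + vecMulVec x x)⁻¹ *ᵥ x)) := by
    nth_rewrite 1 [hs, key2]
    rw [dotProduct_smul, smul_eq_mul]
  have h4 : (0:ℝ) < 1 + s := by linarith
  rw [eq_div_iff h4.ne']
  linear_combination -h3

lemma div_le_log {s : ℝ} (hs : 0 ≤ s) : s / (1 + s) ≤ Real.log (1 + s) := by
  have h1 : (0:ℝ) < 1 + s := by linarith
  have h2 := Real.log_le_sub_one_of_pos (show (0:ℝ) < (1 + s)⁻¹ by positivity)
  rw [Real.log_inv] at h2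
  have e : s / (1 + s) = 1 - (1 + s)⁻¹ := by field_simp; ring
  linarith

lemma pot_step (hlam : 0 < lam) (n : ℕ) :
    Z (p + n) ⬝ᵥ ((Ubar lam p Z (n + 1))⁻¹ *ᵥ Z (p + n)) ≤
      Real.log ((Ubar lam p Z (n + 1)).det) - Real.log ((Ubar lam p Z n).det) := by
  have hU := Ubar_posDef (p := p) (Z := Z) hlam n
  set x := Z (p + n) with hx
  set s := x ⬝ᵥ ((Ubar lam p Z n)⁻¹ *ᵥ x) with hs
  have hs0 : 0 ≤ s := quad_inv_nonneg hU x
  rw [Ubar_succ, quad_rank_one hU x, det_rank_one hU x, ← hs,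
    Real.log_mul hU.det_pos.ne' (by linarith : (1:ℝ) + s ≠ 0)]
  have := div_le_log hs0
  linarith

lemma pot_sum (hlam : 0 < lam) (N : ℕ) :
    ∑ j ∈ Finset.range N, Z (p + j) ⬝ᵥ ((Ubar lam p Z (j + 1))⁻¹ *ᵥ Z (p + j)) ≤
      Real.log ((lam⁻¹ • Ubar lam p Z N).det) := by
  have tele : ∑ j ∈ Finset.range N,
      (Real.log ((Ubar lam p Z (j + 1)).det) - Real.log ((Ubar lam p Z j).det))
      = Real.log ((Ubar lam p Z N).det) - Real.log ((Ubar lam p Z 0).det) :=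
    Finset.sum_range_sub (fun j => Real.log ((Ubar lam p Z j).det)) N
  have hdet0 : (Ubar lam p Z 0).det = lam ^ q := by
    rw [Ubar]
    simp [Matrix.det_smul]
  have hrhs : Real.log ((lam⁻¹ • Ubar lam p Z N).det)
      = Real.log ((Ubar lam p Z N).det) - Real.log ((Ubar lam p Z 0).det) := by
    rw [Matrix.det_smul, hdet0, Real.log_mul (by positivity)
      (Ubar_posDef (p := p) (Z := Z) hlam N).det_pos.ne', Real.log_pow, Real.log_pow,
      Real.log_inv, Fintype.card_fin]
    ring
  rw [hrhs, ← tele]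
  exact Finset.sum_le_sum fun j _ => pot_step hlam j
lemma evnorm_add_sq_le {α : Type*} [Fintype α] (u v : α → ℝ) :
    evnorm (u + v) ^ 2 ≤ 2 * evnorm u ^ 2 + 2 * evnorm v ^ 2 := by
  rw [evnorm_sq, evnorm_sq, evnorm_sq, Finset.mul_sum, Finset.mul_sum,
    ← Finset.sum_add_distrib]
  exact Finset.sum_le_sum fun i _ => by
    simp only [Pi.add_apply]; nlinarith [sq_nonneg (u i - v i)]

lemma evnorm_sum_smul_sq_le {α : Type*} [Fintype α] {ι : Type*} (s : Finset ι)
    (c : ι → ℝ) (y : ι → α → ℝ) :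
    evnorm (∑ t ∈ s, c t • y t) ^ 2 ≤ (∑ t ∈ s, c t ^ 2) * ∑ t ∈ s, evnorm (y t) ^ 2 := by
  rw [evnorm_sq]
  have pw : ∀ i : α, ((∑ t ∈ s, c t • y t) i) ^ 2
      ≤ (∑ t ∈ s, c t ^ 2) * ∑ t ∈ s, (y t i) ^ 2 := by
    intro i
    have := Finset.sum_mul_sq_le_sq_mul_sq s c (fun t => y t i)
    simpa [Finset.sum_apply, Pi.smul_apply, smul_eq_mul] using this
  calc ∑ i, ((∑ t ∈ s, c t • y t) i) ^ 2
      ≤ ∑ i : α, (∑ t ∈ s, c t ^ 2) * ∑ t ∈ s, (y t i) ^ 2 :=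
        Finset.sum_le_sum fun i _ => pw i
    _ = (∑ t ∈ s, c t ^ 2) * ∑ t ∈ s, evnorm (y t) ^ 2 := by
        rw [← Finset.mul_sum]
        congr 1
        rw [Finset.sum_comm]
        exact Finset.sum_congr rfl fun t _ => (evnorm_sq (y t)).symm

lemma mulVec_sum_smul (M : Matrix (Fin q) (Fin q) ℝ) {ι : Type*} (s : Finset ι)
    (c : ι → ℝ) (w : ι → Fin q → ℝ) :
    M *ᵥ (∑ t ∈ s, c t • w t) = ∑ t ∈ s, c t • (M *ᵥ w t) := by
  simp only [← Matrix.mulVecLin_apply, map_sum, LinearMap.map_smul]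

/-- if `Z_k = ∑_{t=1}^d a_{d-t} Z_{k-t} + δ_k` for `T ≤ k ≤ 2T-1`, then
`∑_{k=T}^{2T-1} ‖V̄_{k-1}^{-1/2} Z_k‖² ≤ 2 d ‖a‖₂² log det(V̄_{2T-1} λ⁻¹)
  + 2 ∑_{k=T}^{2T-1} ‖V̄_{k-1}^{-1/2} δ_k‖²`. -/
theorem normalized_sum_arma_bound {q : ℕ} (lam : ℝ) (hlam : 0 < lam)
    (p d T : ℕ) (hT : p + d ≤ T) (a : ℕ → ℝ)
    (Z : ℕ → Fin q → ℝ) (δv : ℕ → Fin q → ℝ)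
    (hrec : ∀ k, T ≤ k → k ≤ 2 * T - 1 →
      Z k = (∑ t ∈ Finset.Icc 1 d, a (d - t) • Z (k - t)) + δv k) :
    ∑ k ∈ Finset.Icc T (2 * T - 1),
        evnorm (matInvSqrt (Vbar lam p Z (k - 1)) *ᵥ Z k) ^ 2 ≤
      2 * d * (1 + ∑ i ∈ Finset.range d, (a i) ^ 2) *
          Real.log ((lam⁻¹ • Vbar lam p Z (2 * T - 1)).det) +
        2 * ∑ k ∈ Finset.Icc T (2 * T - 1),
          evnorm (matInvSqrt (Vbar lam p Z (k - 1)) *ᵥ δv k) ^ 2 := by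
  set K := Finset.Icc T (2 * T - 1) with hK
  set L := Real.log ((lam⁻¹ • Vbar lam p Z (2 * T - 1)).det) with hL
  set A2 := ∑ i ∈ Finset.range d, (a i) ^ 2 with hA2
  have hA2nn : 0 ≤ A2 := Finset.sum_nonneg fun i _ => sq_nonneg _
  have hSd : 0 ≤ 2 * ∑ k ∈ K, evnorm (matInvSqrt (Vbar lam p Z (k - 1)) *ᵥ δv k) ^ 2 := by
    positivity
  rcases Nat.eq_zero_or_pos d with hd0 | hd1
  · -- degenerate case d = 0 : Z k = δv k on the window
    have hZ : ∀ k ∈ K, Z k = δv k := by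
      intro k hk
      rw [hK, Finset.mem_Icc] at hk
      have := hrec k hk.1 hk.2
      rwa [hd0, Finset.Icc_eq_empty (by omega), Finset.sum_empty, zero_add] at this
    have hLHS : ∑ k ∈ K, evnorm (matInvSqrt (Vbar lam p Z (k - 1)) *ᵥ Z k) ^ 2
        = ∑ k ∈ K, evnorm (matInvSqrt (Vbar lam p Z (k - 1)) *ᵥ δv k) ^ 2 :=
      Finset.sum_congr rfl fun k hk => by rw [hZ k hk]
    have hnn : 0 ≤ ∑ k ∈ K, evnorm (matInvSqrt (Vbar lam p Z (k - 1)) *ᵥ δv k) ^ 2 :=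
      Finset.sum_nonneg fun k _ => sq_nonneg _
    rw [hLHS, hd0]
    push_cast
    linarith
  -- main case d ≥ 1
  have hT1 : 1 ≤ T := by omega
  -- the potential terms
  set tp : ℕ → ℝ := fun j => Z (p + j) ⬝ᵥ ((Ubar lam p Z (j + 1))⁻¹ *ᵥ Z (p + j)) with htp
  have htp0 : ∀ j, 0 ≤ tp j := fun j => quad_inv_nonneg (Ubar_posDef (p := p) (Z := Z) hlam (j + 1)) _
  have hLsum : ∑ j ∈ Finset.range (2 * T - p), tp j ≤ L := by
    have h1 := pot_sum (p := p) (Z := Z) hlam (2 * T - p)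
    have h2 : Vbar lam p Z (2 * T - 1) = Ubar lam p Z (2 * T - p) := by
      rw [Vbar_eq_Ubar]
      have e : 2 * T - 1 + 1 - p = 2 * T - p := by omega
      rw [e]
    rw [hL, h2]
    exact h1
  have hL0 : 0 ≤ L :=
    le_trans (Finset.sum_nonneg fun j _ => htp0 j) hLsum
  -- step 2 : per (k, t) bound by a potential term
  have step2 : ∀ k ∈ K, ∀ t ∈ Finset.Icc 1 d,
      evnorm (matInvSqrt (Vbar lam p Z (k - 1)) *ᵥ Z (k - t)) ^ 2 ≤ tp (k - t - p) := by
    intro k hk t ht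
    rw [hK, Finset.mem_Icc] at hk
    rw [Finset.mem_Icc] at ht
    have e1 : Vbar lam p Z (k - 1) = Ubar lam p Z (k - p) := by
      rw [Vbar_eq_Ubar]
      have e : k - 1 + 1 - p = k - p := by omega
      rw [e]
    have hVk : (Vbar lam p Z (k - 1)).PosDef := by
      rw [e1]; exact Ubar_posDef (p := p) (Z := Z) hlam _
    rw [evnorm_matInvSqrt_sq hVk, e1]
    have e2 : k - t - p + 1 ≤ k - p := by omega
    have mono := quad_inv_mono (Ubar_posDef (p := p) (Z := Z) hlam (k - t - p + 1))
      (Ubar_posDef (p := p) (Z := Z) hlam (k - p))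
      (Ubar_sub_posSemidef (p := p) (Z := Z) e2) (Z (k - t))
    refine le_trans mono (le_of_eq ?_)
    have e3 : p + (k - t - p) = k - t := by omega
    simp only [htp, e3]
  -- step 1 : per-k decomposition
  have step1 : ∀ k ∈ K,
      evnorm (matInvSqrt (Vbar lam p Z (k - 1)) *ᵥ Z k) ^ 2
        ≤ 2 * A2 * (∑ t ∈ Finset.Icc 1 d,
            evnorm (matInvSqrt (Vbar lam p Z (k - 1)) *ᵥ Z (k - t)) ^ 2)
          + 2 * evnorm (matInvSqrt (Vbar lam p Z (k - 1)) *ᵥ δv k) ^ 2 := by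
    intro k hk
    rw [hK, Finset.mem_Icc] at hk
    rw [hrec k hk.1 hk.2, mulVec_add]
    refine le_trans (evnorm_add_sq_le _ _) ?_
    have hsplit := evnorm_sum_smul_sq_le (Finset.Icc 1 d) (fun t => a (d - t))
      (fun t => matInvSqrt (Vbar lam p Z (k - 1)) *ᵥ Z (k - t))
    rw [mulVec_sum_smul]
    have hre : ∑ t ∈ Finset.Icc 1 d, (a (d - t)) ^ 2 = A2 := by
      rw [hA2]
      apply Finset.sum_nbij' (fun t => d - t) (fun i => d - i) <;>
        intros <;> simp_all [Finset.mem_Icc, Finset.mem_range] <;> omega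
    rw [hre] at hsplit
    have := mul_le_mul_of_nonneg_left hsplit (by norm_num : (0:ℝ) ≤ 2)
    calc 2 * evnorm (∑ t ∈ Finset.Icc 1 d,
            a (d - t) • (matInvSqrt (Vbar lam p Z (k - 1)) *ᵥ Z (k - t))) ^ 2
          + 2 * evnorm (matInvSqrt (Vbar lam p Z (k - 1)) *ᵥ δv k) ^ 2
        ≤ 2 * (A2 * ∑ t ∈ Finset.Icc 1 d,
              evnorm (matInvSqrt (Vbar lam p Z (k - 1)) *ᵥ Z (k - t)) ^ 2)
          + 2 * evnorm (matInvSqrt (Vbar lam p Z (k - 1)) *ᵥ δv k) ^ 2 := by linarith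
      _ = 2 * A2 * (∑ t ∈ Finset.Icc 1 d,
              evnorm (matInvSqrt (Vbar lam p Z (k - 1)) *ᵥ Z (k - t)) ^ 2)
          + 2 * evnorm (matInvSqrt (Vbar lam p Z (k - 1)) *ᵥ δv k) ^ 2 := by ring
  -- step 3 : per t, the reindexed potential sum is ≤ L
  have step3 : ∀ t ∈ Finset.Icc 1 d, ∑ k ∈ K, tp (k - t - p) ≤ L := by
    intro t ht
    rw [Finset.mem_Icc] at ht
    have hinj : ∀ x ∈ K, ∀ y ∈ K, x - t - p = y - t - p → x = y := by
      intro x hx y hy h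
      rw [hK, Finset.mem_Icc] at hx hy
      omega
    rw [← Finset.sum_image hinj]
    refine le_trans (Finset.sum_le_sum_of_subset_of_nonneg ?_ fun j _ _ => htp0 j) hLsum
    intro j hj
    rw [Finset.mem_image] at hj
    obtain ⟨k, hk, rfl⟩ := hj
    rw [hK, Finset.mem_Icc] at hk
    rw [Finset.mem_range]
    omega
  -- assemble
  have h2dL : (0:ℝ) ≤ 2 * d * L := by positivity
  calc ∑ k ∈ K, evnorm (matInvSqrt (Vbar lam p Z (k - 1)) *ᵥ Z k) ^ 2
      ≤ ∑ k ∈ K, (2 * A2 * (∑ t ∈ Finset.Icc 1 d,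
            evnorm (matInvSqrt (Vbar lam p Z (k - 1)) *ᵥ Z (k - t)) ^ 2)
          + 2 * evnorm (matInvSqrt (Vbar lam p Z (k - 1)) *ᵥ δv k) ^ 2) :=
        Finset.sum_le_sum step1
    _ ≤ ∑ k ∈ K, (2 * A2 * (∑ t ∈ Finset.Icc 1 d, tp (k - t - p))
          + 2 * evnorm (matInvSqrt (Vbar lam p Z (k - 1)) *ᵥ δv k) ^ 2) := by
        refine Finset.sum_le_sum fun k hk => ?_
        refine add_le_add (mul_le_mul_of_nonneg_left
          (Finset.sum_le_sum fun t ht => step2 k hk t ht) (by positivity)) le_rfl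
    _ = 2 * A2 * (∑ t ∈ Finset.Icc 1 d, ∑ k ∈ K, tp (k - t - p))
          + 2 * ∑ k ∈ K, evnorm (matInvSqrt (Vbar lam p Z (k - 1)) *ᵥ δv k) ^ 2 := by
        rw [Finset.sum_add_distrib, ← Finset.mul_sum, ← Finset.mul_sum, Finset.sum_comm]
    _ ≤ 2 * A2 * (∑ t ∈ Finset.Icc 1 d, L)
          + 2 * ∑ k ∈ K, evnorm (matInvSqrt (Vbar lam p Z (k - 1)) *ᵥ δv k) ^ 2 := by
        refine add_le_add (mul_le_mul_of_nonneg_left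
          (Finset.sum_le_sum step3) (by positivity)) le_rfl
    _ = 2 * A2 * (d * L)
          + 2 * ∑ k ∈ K, evnorm (matInvSqrt (Vbar lam p Z (k - 1)) *ᵥ δv k) ^ 2 := by
        rw [Finset.sum_const, Nat.card_Icc, nsmul_eq_mul]
        norm_num
    _ ≤ 2 * d * (1 + A2) * L
          + 2 * ∑ k ∈ K, evnorm (matInvSqrt (Vbar lam p Z (k - 1)) *ᵥ δv k) ^ 2 := by
        nlinarith [h2dL, mul_nonneg hA2nn hL0]
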